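/- In the free SMI category M, if no propositional letter occurs in A and B, then any two arrows f, g : A → B are equal. -/

import Mathlib

namespace SMI

/-- Objects of the free symmetric bimonoidal intermuting category 𝓜 :
propositional formulas over an infinite set of letters (indexed by ℕ),
the constants ⊥ and ⊤, and the connectives ∨ and ∧. -/
inductive Frm : Type
  | pl : ℕ → Frm
  | bot : Frm
  | top : Frm
  | or : Frm → Frm → Frm
  | and : Frm → Frm → Frm
  deriving DecidableEq

/-- Arrow terms of 𝓜 , generated from the primitive arrow terms
(associativity b, symmetry c, unit isomorphisms δ and σ, intermutation cᵏ,
the w-arrows and κ) by composition, ∨ and ∧.  The suffixes `To`/`From`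
record the direction (`→`/`←`) of the corresponding isomorphism. -/
inductive Tm : Frm → Frm → Type
  | id (A : Frm) : Tm A A
  | comp {A B C : Frm} : Tm B C → Tm A B → Tm A C
  | orM {A B C D : Frm} : Tm A B → Tm C D → Tm (A.or C) (B.or D)
  | andM {A B C D : Frm} : Tm A B → Tm C D → Tm (A.and C) (B.and D)
  | bOrTo (A B C : Frm) : Tm (A.or (B.or C)) ((A.or B).or C)
  | bOrFrom (A B C : Frm) : Tm ((A.or B).or C) (A.or (B.or C))
  | bAndTo (A B C : Frm) : Tm (A.and (B.and C)) ((A.and B).and C)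
  | bAndFrom (A B C : Frm) : Tm ((A.and B).and C) (A.and (B.and C))
  | cOr (A B : Frm) : Tm (A.or B) (B.or A)
  | cAnd (A B : Frm) : Tm (A.and B) (B.and A)
  | dOrTo (A : Frm) : Tm (A.or Frm.bot) A
  | dOrFrom (A : Frm) : Tm A (A.or Frm.bot)
  | sOrTo (A : Frm) : Tm (Frm.bot.or A) A
  | sOrFrom (A : Frm) : Tm A (Frm.bot.or A)
  | dAndTo (A : Frm) : Tm (A.and Frm.top) A
  | dAndFrom (A : Frm) : Tm A (A.and Frm.top)
  | sAndTo (A : Frm) : Tm (Frm.top.and A) A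
  | sAndFrom (A : Frm) : Tm A (Frm.top.and A)
  | ck (A B C D : Frm) : Tm ((A.and B).or (C.and D)) ((A.or C).and (B.or D))
  | wAndTo : Tm (Frm.bot.and Frm.bot) Frm.bot
  | wAndFrom : Tm Frm.bot (Frm.bot.and Frm.bot)
  | wOrTo : Tm (Frm.top.or Frm.top) Frm.top
  | wOrFrom : Tm Frm.top (Frm.top.or Frm.top)
  | kappa : Tm Frm.bot Frm.top

/-- The equality of arrows of the free SMI category 𝓜 : the smallest
congruence (with respect to ∘, ∨, ∧) containing the equations of the two
symmetric monoidal structures, the naturality and isomorphism conditions,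
and the thirteen coherence diagrams (1)-(13) of an SMI category. -/
inductive MEq : ∀ {A B : Frm}, Tm A B → Tm A B → Prop
  -- equivalence
  | refl {A B : Frm} (f : Tm A B) : MEq f f
  | symm {A B : Frm} {f g : Tm A B} : MEq f g → MEq g f
  | trans {A B : Frm} {f g h : Tm A B} : MEq f g → MEq g h → MEq f h
  -- congruence
  | comp_congr {A B C : Frm} {g g' : Tm B C} {f f' : Tm A B} :
      MEq g g' → MEq f f' → MEq (g.comp f) (g'.comp f')
  | or_congr {A B C D : Frm} {f f' : Tm A B} {g g' : Tm C D} :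
      MEq f f' → MEq g g' → MEq (f.orM g) (f'.orM g')
  | and_congr {A B C D : Frm} {f f' : Tm A B} {g g' : Tm C D} :
      MEq f f' → MEq g g' → MEq (f.andM g) (f'.andM g')
  -- category
  | id_comp {A B : Frm} (f : Tm A B) : MEq ((Tm.id B).comp f) f
  | comp_id {A B : Frm} (f : Tm A B) : MEq (f.comp (Tm.id A)) f
  | comp_assoc {A B C D : Frm} (h : Tm C D) (g : Tm B C) (f : Tm A B) :
      MEq ((h.comp g).comp f) (h.comp (g.comp f))
  -- ∨ and ∧ are biendofunctors
  | or_id (A B : Frm) : MEq ((Tm.id A).orM (Tm.id B)) (Tm.id (A.or B))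
  | and_id (A B : Frm) : MEq ((Tm.id A).andM (Tm.id B)) (Tm.id (A.and B))
  | or_comp {A B C A' B' C' : Frm} (g : Tm B C) (f : Tm A B) (g' : Tm B' C') (f' : Tm A' B') :
      MEq ((g.comp f).orM (g'.comp f')) ((g.orM g').comp (f.orM f'))
  | and_comp {A B C A' B' C' : Frm} (g : Tm B C) (f : Tm A B) (g' : Tm B' C') (f' : Tm A' B') :
      MEq ((g.comp f).andM (g'.comp f')) ((g.andM g').comp (f.andM f'))
  -- naturality
  | bOr_nat {A A' B B' C C' : Frm} (f : Tm A A') (g : Tm B B') (h : Tm C C') :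
      MEq ((Tm.bOrTo A' B' C').comp (f.orM (g.orM h))) (((f.orM g).orM h).comp (Tm.bOrTo A B C))
  | bAnd_nat {A A' B B' C C' : Frm} (f : Tm A A') (g : Tm B B') (h : Tm C C') :
      MEq ((Tm.bAndTo A' B' C').comp (f.andM (g.andM h))) (((f.andM g).andM h).comp (Tm.bAndTo A B C))
  | cOr_nat {A A' B B' : Frm} (f : Tm A A') (g : Tm B B') :
      MEq ((Tm.cOr A' B').comp (f.orM g)) ((g.orM f).comp (Tm.cOr A B))
  | cAnd_nat {A A' B B' : Frm} (f : Tm A A') (g : Tm B B') :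
      MEq ((Tm.cAnd A' B').comp (f.andM g)) ((g.andM f).comp (Tm.cAnd A B))
  | dOr_nat {A A' : Frm} (f : Tm A A') :
      MEq ((Tm.dOrTo A').comp (f.orM (Tm.id Frm.bot))) (f.comp (Tm.dOrTo A))
  | sOr_nat {A A' : Frm} (f : Tm A A') :
      MEq ((Tm.sOrTo A').comp ((Tm.id Frm.bot).orM f)) (f.comp (Tm.sOrTo A))
  | dAnd_nat {A A' : Frm} (f : Tm A A') :
      MEq ((Tm.dAndTo A').comp (f.andM (Tm.id Frm.top))) (f.comp (Tm.dAndTo A))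
  | sAnd_nat {A A' : Frm} (f : Tm A A') :
      MEq ((Tm.sAndTo A').comp ((Tm.id Frm.top).andM f)) (f.comp (Tm.sAndTo A))
  | ck_nat {A A' B B' C C' D D' : Frm}
      (f : Tm A A') (g : Tm B B') (h : Tm C C') (k : Tm D D') :
      MEq ((Tm.ck A' B' C' D').comp ((f.andM g).orM (h.andM k)))
          (((f.orM h).andM (g.orM k)).comp (Tm.ck A B C D))
  -- the primitive arrows other than cᵏ and κ are isomorphisms
  | bOr_iso1 (A B C : Frm) : MEq ((Tm.bOrTo A B C).comp (Tm.bOrFrom A B C)) (Tm.id _)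
  | bOr_iso2 (A B C : Frm) : MEq ((Tm.bOrFrom A B C).comp (Tm.bOrTo A B C)) (Tm.id _)
  | bAnd_iso1 (A B C : Frm) : MEq ((Tm.bAndTo A B C).comp (Tm.bAndFrom A B C)) (Tm.id _)
  | bAnd_iso2 (A B C : Frm) : MEq ((Tm.bAndFrom A B C).comp (Tm.bAndTo A B C)) (Tm.id _)
  | dOr_iso1 (A : Frm) : MEq ((Tm.dOrTo A).comp (Tm.dOrFrom A)) (Tm.id _)
  | dOr_iso2 (A : Frm) : MEq ((Tm.dOrFrom A).comp (Tm.dOrTo A)) (Tm.id _)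
  | sOr_iso1 (A : Frm) : MEq ((Tm.sOrTo A).comp (Tm.sOrFrom A)) (Tm.id _)
  | sOr_iso2 (A : Frm) : MEq ((Tm.sOrFrom A).comp (Tm.sOrTo A)) (Tm.id _)
  | dAnd_iso1 (A : Frm) : MEq ((Tm.dAndTo A).comp (Tm.dAndFrom A)) (Tm.id _)
  | dAnd_iso2 (A : Frm) : MEq ((Tm.dAndFrom A).comp (Tm.dAndTo A)) (Tm.id _)
  | sAnd_iso1 (A : Frm) : MEq ((Tm.sAndTo A).comp (Tm.sAndFrom A)) (Tm.id _)
  | sAnd_iso2 (A : Frm) : MEq ((Tm.sAndFrom A).comp (Tm.sAndTo A)) (Tm.id _)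
  | wOr_iso1 : MEq (Tm.wOrTo.comp Tm.wOrFrom) (Tm.id _)
  | wOr_iso2 : MEq (Tm.wOrFrom.comp Tm.wOrTo) (Tm.id _)
  | wAnd_iso1 : MEq (Tm.wAndTo.comp Tm.wAndFrom) (Tm.id _)
  | wAnd_iso2 : MEq (Tm.wAndFrom.comp Tm.wAndTo) (Tm.id _)
  | cOr_inv (A B : Frm) : MEq ((Tm.cOr B A).comp (Tm.cOr A B)) (Tm.id _)
  | cAnd_inv (A B : Frm) : MEq ((Tm.cAnd B A).comp (Tm.cAnd A B)) (Tm.id _)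
  -- Mac Lane coherence for the two symmetric monoidal structures
  | pentagonOr (A B C D : Frm) :
      MEq ((Tm.bOrTo (A.or B) C D).comp (Tm.bOrTo A B (C.or D)))
          (((Tm.bOrTo A B C).orM (Tm.id D)).comp
            ((Tm.bOrTo A (B.or C) D).comp ((Tm.id A).orM (Tm.bOrTo B C D))))
  | pentagonAnd (A B C D : Frm) :
      MEq ((Tm.bAndTo (A.and B) C D).comp (Tm.bAndTo A B (C.and D)))
          (((Tm.bAndTo A B C).andM (Tm.id D)).comp
            ((Tm.bAndTo A (B.and C) D).comp ((Tm.id A).andM (Tm.bAndTo B C D))))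
  | triangleOr (A B : Frm) :
      MEq (((Tm.dOrTo A).orM (Tm.id B)).comp (Tm.bOrTo A Frm.bot B))
          ((Tm.id A).orM (Tm.sOrTo B))
  | triangleAnd (A B : Frm) :
      MEq (((Tm.dAndTo A).andM (Tm.id B)).comp (Tm.bAndTo A Frm.top B))
          ((Tm.id A).andM (Tm.sAndTo B))
  | hexagonOr (A B C : Frm) :
      MEq ((Tm.bOrTo C A B).comp ((Tm.cOr (A.or B) C).comp (Tm.bOrTo A B C)))
          (((Tm.cOr A C).orM (Tm.id B)).comp
            ((Tm.bOrTo A C B).comp ((Tm.id A).orM (Tm.cOr B C))))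
  | hexagonAnd (A B C : Frm) :
      MEq ((Tm.bAndTo C A B).comp ((Tm.cAnd (A.and B) C).comp (Tm.bAndTo A B C)))
          (((Tm.cAnd A C).andM (Tm.id B)).comp
            ((Tm.bAndTo A C B).comp ((Tm.id A).andM (Tm.cAnd B C))))
  | sigmaOr_c (A : Frm) : MEq (Tm.sOrTo A) ((Tm.dOrTo A).comp (Tm.cOr Frm.bot A))
  | sigmaAnd_c (A : Frm) : MEq (Tm.sAndTo A) ((Tm.dAndTo A).comp (Tm.cAnd Frm.top A))
  -- the thirteen SMI diagrams
  | diag1 (A B C D E F : Frm) :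
      MEq ((Tm.bAndTo (A.or D) (B.or E) (C.or F)).comp
            (((Tm.id (A.or D)).andM (Tm.ck B C E F)).comp (Tm.ck A (B.and C) D (E.and F))))
          (((Tm.ck A B D E).andM (Tm.id (C.or F))).comp
            ((Tm.ck (A.and B) C (D.and E) F).comp ((Tm.bAndTo A B C).orM (Tm.bAndTo D E F))))
  | diag2 (A B C D E F : Frm) :
      MEq (((Tm.bOrTo A B C).andM (Tm.bOrTo D E F)).comp
            ((Tm.ck A D (B.or C) (E.or F)).comp ((Tm.id (A.and D)).orM (Tm.ck B E C F))))
          ((Tm.ck (A.or B) (D.or E) C F).comp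
            (((Tm.ck A D B E).orM (Tm.id (C.and F))).comp
              (Tm.bOrTo (A.and D) (B.and E) (C.and F))))
  | diag3 (A B C D : Frm) :
      MEq ((Tm.cAnd (A.or C) (B.or D)).comp (Tm.ck A B C D))
          ((Tm.ck B A D C).comp ((Tm.cAnd A B).orM (Tm.cAnd C D)))
  | diag4 (A B C D : Frm) :
      MEq ((Tm.ck B D A C).comp (Tm.cOr (A.and C) (B.and D)))
          (((Tm.cOr A B).andM (Tm.cOr C D)).comp (Tm.ck A C B D))
  | diag5 (A B : Frm) :
      MEq (Tm.ck A B Frm.bot Frm.bot)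
          (((Tm.dOrFrom A).andM (Tm.dOrFrom B)).comp
            ((Tm.dOrTo (A.and B)).comp ((Tm.id (A.and B)).orM Tm.wAndTo)))
  | diag6 (A B : Frm) :
      MEq (Tm.ck A Frm.top B Frm.top)
          (((Tm.id (A.or B)).andM Tm.wOrFrom).comp
            ((Tm.dAndFrom (A.or B)).comp ((Tm.dAndTo A).orM (Tm.dAndTo B))))
  | diag7 :
      MEq (Tm.bOrTo Frm.top Frm.top Frm.top)
          ((Tm.wOrFrom.orM (Tm.id Frm.top)).comp ((Tm.id Frm.top).orM Tm.wOrTo))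
  | diag8 :
      MEq (Tm.bAndTo Frm.bot Frm.bot Frm.bot)
          ((Tm.wAndFrom.andM (Tm.id Frm.bot)).comp ((Tm.id Frm.bot).andM Tm.wAndTo))
  | diag9 :
      MEq ((Tm.id Frm.top).orM Tm.kappa) (Tm.wOrFrom.comp (Tm.dOrTo Frm.top))
  | diag10 :
      MEq ((Tm.id Frm.bot).andM Tm.kappa) ((Tm.dAndFrom Frm.bot).comp Tm.wAndTo)
  | diag11 :
      MEq (Tm.ck Frm.top Frm.bot Frm.bot Frm.top)
          (((Tm.dOrFrom Frm.top).andM (Tm.sOrFrom Frm.top)).comp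
            ((Tm.dAndFrom Frm.top).comp
              (Tm.kappa.comp
                ((Tm.dOrTo Frm.bot).comp ((Tm.sAndTo Frm.bot).orM (Tm.dAndTo Frm.bot))))))
  | diag12 : MEq (Tm.cOr Frm.top Frm.top) (Tm.wOrFrom.comp Tm.wOrTo)
  | diag13 : MEq (Tm.cAnd Frm.bot Frm.bot) (Tm.wAndFrom.comp Tm.wAndTo)

end SMI

namespace SMI

/-- No propositional letter occurs in the formula. -/
def NoLtr : Frm → Prop
  | Frm.pl _ => False
  | Frm.bot => True
  | Frm.top => True
  | Frm.or A B => NoLtr A ∧ NoLtr B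
  | Frm.and A B => NoLtr A ∧ NoLtr B
open CategoryTheory

instance tmSetoid (A B : Frm) : Setoid (Tm A B) :=
  ⟨MEq, ⟨MEq.refl, fun h => h.symm, fun h1 h2 => h1.trans h2⟩⟩

abbrev QHom (A B : Frm) := Quotient (tmSetoid A B)

def qid (A : Frm) : QHom A A := ⟦Tm.id A⟧

def qcomp {A B C : Frm} (f : QHom A B) (g : QHom B C) : QHom A C :=
  Quotient.lift₂ (fun f g => (⟦g.comp f⟧ : QHom A C))
    (fun _ _ _ _ h1 h2 => Quotient.sound (MEq.comp_congr h2 h1)) f g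

theorem qid_comp {A B : Frm} (f : QHom A B) : qcomp (qid A) f = f :=
  Quotient.inductionOn f (fun f => Quotient.sound (MEq.comp_id f))

theorem qcomp_id {A B : Frm} (f : QHom A B) : qcomp f (qid B) = f :=
  Quotient.inductionOn f (fun f => Quotient.sound (MEq.id_comp f))

theorem qassoc {A B C D : Frm} (f : QHom A B) (g : QHom B C) (h : QHom C D) :
    qcomp (qcomp f g) h = qcomp f (qcomp g h) :=
  Quotient.inductionOn₃ f g h
    (fun f g h => Quotient.sound (MEq.comp_assoc h g f).symm)

instance : Category Frm where
  Hom := QHom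
  id := qid
  comp := qcomp
  id_comp := qid_comp
  comp_id := qcomp_id
  assoc := qassoc

theorem homMk {A B : Frm} {f g : Tm A B} (h : MEq f g) : (⟦f⟧ : QHom A B) = ⟦g⟧ :=
  Quotient.sound h

def orH {A B C D : Frm} (f : A ⟶ B) (g : C ⟶ D) : (A.or C) ⟶ (B.or D) :=
  Quotient.lift₂ (fun f g => ⟦f.orM g⟧)
    (fun _ _ _ _ h1 h2 => Quotient.sound (MEq.or_congr h1 h2)) f g

def andH {A B C D : Frm} (f : A ⟶ B) (g : C ⟶ D) : (A.and C) ⟶ (B.and D) :=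
  Quotient.lift₂ (fun f g => ⟦f.andM g⟧)
    (fun _ _ _ _ h1 h2 => Quotient.sound (MEq.and_congr h1 h2)) f g

infixr:70 " ⊻ " => orH
infixr:70 " ⊼ " => andH

-- primitive arrows at the quotient level
def ao (A B C : Frm) : A.or (B.or C) ⟶ (A.or B).or C := ⟦Tm.bOrTo A B C⟧
def ao' (A B C : Frm) : (A.or B).or C ⟶ A.or (B.or C) := ⟦Tm.bOrFrom A B C⟧
def aa (A B C : Frm) : A.and (B.and C) ⟶ (A.and B).and C := ⟦Tm.bAndTo A B C⟧
def aa' (A B C : Frm) : (A.and B).and C ⟶ A.and (B.and C) := ⟦Tm.bAndFrom A B C⟧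
def co (A B : Frm) : A.or B ⟶ B.or A := ⟦Tm.cOr A B⟧
def ca (A B : Frm) : A.and B ⟶ B.and A := ⟦Tm.cAnd A B⟧
def ro (A : Frm) : A.or Frm.bot ⟶ A := ⟦Tm.dOrTo A⟧
def ro' (A : Frm) : A ⟶ A.or Frm.bot := ⟦Tm.dOrFrom A⟧
def lo (A : Frm) : Frm.bot.or A ⟶ A := ⟦Tm.sOrTo A⟧
def lo' (A : Frm) : A ⟶ Frm.bot.or A := ⟦Tm.sOrFrom A⟧
def ra (A : Frm) : A.and Frm.top ⟶ A := ⟦Tm.dAndTo A⟧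
def ra' (A : Frm) : A ⟶ A.and Frm.top := ⟦Tm.dAndFrom A⟧
def la (A : Frm) : Frm.top.and A ⟶ A := ⟦Tm.sAndTo A⟧
def la' (A : Frm) : A ⟶ Frm.top.and A := ⟦Tm.sAndFrom A⟧
def ik (A B C D : Frm) : (A.and B).or (C.and D) ⟶ (A.or C).and (B.or D) := ⟦Tm.ck A B C D⟧
def wa : Frm.bot.and Frm.bot ⟶ Frm.bot := ⟦Tm.wAndTo⟧
def wa' : Frm.bot ⟶ Frm.bot.and Frm.bot := ⟦Tm.wAndFrom⟧
def wo : Frm.top.or Frm.top ⟶ Frm.top := ⟦Tm.wOrTo⟧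
def wo' : Frm.top ⟶ Frm.top.or Frm.top := ⟦Tm.wOrFrom⟧
def kq : (Frm.bot ⟶ Frm.top) := ⟦Tm.kappa⟧

-- lifted equations
@[simp] theorem or_idH (A B : Frm) : (𝟙 A) ⊻ (𝟙 B) = 𝟙 (A.or B) :=
  Quotient.sound (MEq.or_id A B)
@[simp] theorem and_idH (A B : Frm) : (𝟙 A) ⊼ (𝟙 B) = 𝟙 (A.and B) :=
  Quotient.sound (MEq.and_id A B)

theorem or_compH {A B C A' B' C' : Frm} (f : A ⟶ B) (g : B ⟶ C) (f' : A' ⟶ B') (g' : B' ⟶ C') :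
    (f ≫ g) ⊻ (f' ≫ g') = (f ⊻ f') ≫ (g ⊻ g') := by
  induction f using Quotient.ind; induction g using Quotient.ind
  induction f' using Quotient.ind; induction g' using Quotient.ind
  exact Quotient.sound (MEq.or_comp _ _ _ _)

theorem and_compH {A B C A' B' C' : Frm} (f : A ⟶ B) (g : B ⟶ C) (f' : A' ⟶ B') (g' : B' ⟶ C') :
    (f ≫ g) ⊼ (f' ≫ g') = (f ⊼ f') ≫ (g ⊼ g') := by
  induction f using Quotient.ind; induction g using Quotient.ind
  induction f' using Quotient.ind; induction g' using Quotient.ind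
  exact Quotient.sound (MEq.and_comp _ _ _ _)

theorem nat_ao {A A' B B' C C' : Frm} (f : A ⟶ A') (g : B ⟶ B') (h : C ⟶ C') :
    (f ⊻ (g ⊻ h)) ≫ ao A' B' C' = ao A B C ≫ ((f ⊻ g) ⊻ h) := by
  induction f using Quotient.ind; induction g using Quotient.ind; induction h using Quotient.ind
  exact Quotient.sound (MEq.bOr_nat _ _ _)

theorem nat_aa {A A' B B' C C' : Frm} (f : A ⟶ A') (g : B ⟶ B') (h : C ⟶ C') :
    (f ⊼ (g ⊼ h)) ≫ aa A' B' C' = aa A B C ≫ ((f ⊼ g) ⊼ h) := by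
  induction f using Quotient.ind; induction g using Quotient.ind; induction h using Quotient.ind
  exact Quotient.sound (MEq.bAnd_nat _ _ _)

theorem nat_co {A A' B B' : Frm} (f : A ⟶ A') (g : B ⟶ B') :
    (f ⊻ g) ≫ co A' B' = co A B ≫ (g ⊻ f) := by
  induction f using Quotient.ind; induction g using Quotient.ind
  exact Quotient.sound (MEq.cOr_nat _ _)

theorem nat_ca {A A' B B' : Frm} (f : A ⟶ A') (g : B ⟶ B') :
    (f ⊼ g) ≫ ca A' B' = ca A B ≫ (g ⊼ f) := by
  induction f using Quotient.ind; induction g using Quotient.ind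
  exact Quotient.sound (MEq.cAnd_nat _ _)

theorem nat_ro {A A' : Frm} (f : A ⟶ A') :
    (f ⊻ 𝟙 Frm.bot) ≫ ro A' = ro A ≫ f := by
  induction f using Quotient.ind
  exact Quotient.sound (MEq.dOr_nat _)

theorem nat_lo {A A' : Frm} (f : A ⟶ A') :
    ((𝟙 Frm.bot) ⊻ f) ≫ lo A' = lo A ≫ f := by
  induction f using Quotient.ind
  exact Quotient.sound (MEq.sOr_nat _)

theorem nat_ra {A A' : Frm} (f : A ⟶ A') :
    (f ⊼ 𝟙 Frm.top) ≫ ra A' = ra A ≫ f := by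
  induction f using Quotient.ind
  exact Quotient.sound (MEq.dAnd_nat _)

theorem nat_la {A A' : Frm} (f : A ⟶ A') :
    ((𝟙 Frm.top) ⊼ f) ≫ la A' = la A ≫ f := by
  induction f using Quotient.ind
  exact Quotient.sound (MEq.sAnd_nat _)

theorem nat_ik {A A' B B' C C' D D' : Frm}
    (f : A ⟶ A') (g : B ⟶ B') (h : C ⟶ C') (k : D ⟶ D') :
    ((f ⊼ g) ⊻ (h ⊼ k)) ≫ ik A' B' C' D' = ik A B C D ≫ ((f ⊻ h) ⊼ (g ⊻ k)) := by
  induction f using Quotient.ind; induction g using Quotient.ind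
  induction h using Quotient.ind; induction k using Quotient.ind
  exact Quotient.sound (MEq.ck_nat _ _ _ _)

@[simp] theorem ao_ao' (A B C : Frm) : ao' A B C ≫ ao A B C = 𝟙 _ := Quotient.sound (MEq.bOr_iso1 A B C)
@[simp] theorem ao'_ao (A B C : Frm) : ao A B C ≫ ao' A B C = 𝟙 _ := Quotient.sound (MEq.bOr_iso2 A B C)
@[simp] theorem aa_aa' (A B C : Frm) : aa' A B C ≫ aa A B C = 𝟙 _ := Quotient.sound (MEq.bAnd_iso1 A B C)
@[simp] theorem aa'_aa (A B C : Frm) : aa A B C ≫ aa' A B C = 𝟙 _ := Quotient.sound (MEq.bAnd_iso2 A B C)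
@[simp] theorem ro_ro' (A : Frm) : ro' A ≫ ro A = 𝟙 _ := Quotient.sound (MEq.dOr_iso1 A)
@[simp] theorem ro'_ro (A : Frm) : ro A ≫ ro' A = 𝟙 _ := Quotient.sound (MEq.dOr_iso2 A)
@[simp] theorem lo_lo' (A : Frm) : lo' A ≫ lo A = 𝟙 _ := Quotient.sound (MEq.sOr_iso1 A)
@[simp] theorem lo'_lo (A : Frm) : lo A ≫ lo' A = 𝟙 _ := Quotient.sound (MEq.sOr_iso2 A)
@[simp] theorem ra_ra' (A : Frm) : ra' A ≫ ra A = 𝟙 _ := Quotient.sound (MEq.dAnd_iso1 A)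
@[simp] theorem ra'_ra (A : Frm) : ra A ≫ ra' A = 𝟙 _ := Quotient.sound (MEq.dAnd_iso2 A)
@[simp] theorem la_la' (A : Frm) : la' A ≫ la A = 𝟙 _ := Quotient.sound (MEq.sAnd_iso1 A)
@[simp] theorem la'_la (A : Frm) : la A ≫ la' A = 𝟙 _ := Quotient.sound (MEq.sAnd_iso2 A)
@[simp] theorem wo_wo' : wo' ≫ wo = 𝟙 _ := Quotient.sound MEq.wOr_iso1
@[simp] theorem wo'_wo : wo ≫ wo' = 𝟙 _ := Quotient.sound MEq.wOr_iso2
@[simp] theorem wa_wa' : wa' ≫ wa = 𝟙 _ := Quotient.sound MEq.wAnd_iso1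
@[simp] theorem wa'_wa : wa ≫ wa' = 𝟙 _ := Quotient.sound MEq.wAnd_iso2
@[simp] theorem co_co (A B : Frm) : co A B ≫ co B A = 𝟙 _ := Quotient.sound (MEq.cOr_inv A B)
@[simp] theorem ca_ca (A B : Frm) : ca A B ≫ ca B A = 𝟙 _ := Quotient.sound (MEq.cAnd_inv A B)

theorem pent_o (A B C D : Frm) :
    ao A B (C.or D) ≫ ao (A.or B) C D =
      ((𝟙 A ⊻ ao B C D) ≫ ao A (B.or C) D) ≫ (ao A B C ⊻ 𝟙 D) :=
  Quotient.sound (MEq.pentagonOr A B C D)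

theorem pent_a (A B C D : Frm) :
    aa A B (C.and D) ≫ aa (A.and B) C D =
      ((𝟙 A ⊼ aa B C D) ≫ aa A (B.and C) D) ≫ (aa A B C ⊼ 𝟙 D) :=
  Quotient.sound (MEq.pentagonAnd A B C D)

theorem tri_o (A B : Frm) : ao A Frm.bot B ≫ (ro A ⊻ 𝟙 B) = 𝟙 A ⊻ lo B :=
  Quotient.sound (MEq.triangleOr A B)

theorem tri_a (A B : Frm) : aa A Frm.top B ≫ (ra A ⊼ 𝟙 B) = 𝟙 A ⊼ la B :=
  Quotient.sound (MEq.triangleAnd A B)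

theorem hex_o (A B C : Frm) :
    (ao A B C ≫ co (A.or B) C) ≫ ao C A B =
      ((𝟙 A ⊻ co B C) ≫ ao A C B) ≫ (co A C ⊻ 𝟙 B) :=
  Quotient.sound (MEq.hexagonOr A B C)

theorem hex_a (A B C : Frm) :
    (aa A B C ≫ ca (A.and B) C) ≫ aa C A B =
      ((𝟙 A ⊼ ca B C) ≫ aa A C B) ≫ (ca A C ⊼ 𝟙 B) :=
  Quotient.sound (MEq.hexagonAnd A B C)

theorem sig_o (A : Frm) : lo A = co Frm.bot A ≫ ro A := Quotient.sound (MEq.sigmaOr_c A)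
theorem sig_a (A : Frm) : la A = ca Frm.top A ≫ ra A := Quotient.sound (MEq.sigmaAnd_c A)

theorem q_diag3 (A B C D : Frm) :
    ik A B C D ≫ ca (A.or C) (B.or D) = ((ca A B) ⊻ (ca C D)) ≫ ik B A D C :=
  Quotient.sound (MEq.diag3 A B C D)

theorem q_diag4 (A B C D : Frm) :
    co (A.and C) (B.and D) ≫ ik B D A C = ik A C B D ≫ ((co A B) ⊼ (co C D)) :=
  Quotient.sound (MEq.diag4 A B C D)

theorem q_diag5 (A B : Frm) :
    ik A B Frm.bot Frm.bot = (((𝟙 (A.and B)) ⊻ wa) ≫ ro (A.and B)) ≫ (ro' A ⊼ ro' B) :=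
  Quotient.sound (MEq.diag5 A B)

theorem q_diag6 (A B : Frm) :
    ik A Frm.top B Frm.top = ((ra A ⊻ ra B) ≫ ra' (A.or B)) ≫ ((𝟙 (A.or B)) ⊼ wo') :=
  Quotient.sound (MEq.diag6 A B)

theorem q_diag7 : ao Frm.top Frm.top Frm.top = ((𝟙 Frm.top) ⊻ wo) ≫ (wo' ⊻ (𝟙 Frm.top)) :=
  Quotient.sound MEq.diag7

theorem q_diag8 : aa Frm.bot Frm.bot Frm.bot = ((𝟙 Frm.bot) ⊼ wa) ≫ (wa' ⊼ (𝟙 Frm.bot)) :=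
  Quotient.sound MEq.diag8

theorem q_diag9 : (𝟙 Frm.top) ⊻ kq = ro Frm.top ≫ wo' := Quotient.sound MEq.diag9
theorem q_diag10 : (𝟙 Frm.bot) ⊼ kq = wa ≫ ra' Frm.bot := Quotient.sound MEq.diag10

theorem q_diag11 :
    ik Frm.top Frm.bot Frm.bot Frm.top =
      ((((la Frm.bot ⊻ ra Frm.bot) ≫ ro Frm.bot) ≫ kq) ≫ ra' Frm.top) ≫
        (ro' Frm.top ⊼ lo' Frm.top) :=
  Quotient.sound MEq.diag11

theorem q_diag12 : co Frm.top Frm.top = wo ≫ wo' := Quotient.sound MEq.diag12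
theorem q_diag13 : ca Frm.bot Frm.bot = wa ≫ wa' := Quotient.sound MEq.diag13

-- IsIso instances for the invertible generators
instance (A B C : Frm) : IsIso (ao A B C) := ⟨ao' A B C, by simp, by simp⟩
instance (A B C : Frm) : IsIso (ao' A B C) := ⟨ao A B C, by simp, by simp⟩
instance (A B C : Frm) : IsIso (aa A B C) := ⟨aa' A B C, by simp, by simp⟩
instance (A B C : Frm) : IsIso (aa' A B C) := ⟨aa A B C, by simp, by simp⟩
instance (A B : Frm) : IsIso (co A B) := ⟨co B A, by simp, by simp⟩
instance (A B : Frm) : IsIso (ca A B) := ⟨ca B A, by simp, by simp⟩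
instance (A : Frm) : IsIso (ro A) := ⟨ro' A, by simp, by simp⟩
instance (A : Frm) : IsIso (ro' A) := ⟨ro A, by simp, by simp⟩
instance (A : Frm) : IsIso (lo A) := ⟨lo' A, by simp, by simp⟩
instance (A : Frm) : IsIso (lo' A) := ⟨lo A, by simp, by simp⟩
instance (A : Frm) : IsIso (ra A) := ⟨ra' A, by simp, by simp⟩
instance (A : Frm) : IsIso (ra' A) := ⟨ra A, by simp, by simp⟩
instance (A : Frm) : IsIso (la A) := ⟨la' A, by simp, by simp⟩
instance (A : Frm) : IsIso (la' A) := ⟨la A, by simp, by simp⟩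
instance : IsIso wo := ⟨wo', by simp, by simp⟩
instance : IsIso wo' := ⟨wo, by simp, by simp⟩
instance : IsIso wa := ⟨wa', by simp, by simp⟩
instance : IsIso wa' := ⟨wa, by simp, by simp⟩

instance orIso {A B C D : Frm} (f : A ⟶ B) (g : C ⟶ D) [IsIso f] [IsIso g] : IsIso (f ⊻ g) :=
  ⟨inv f ⊻ inv g, by rw [← or_compH]; simp, by rw [← or_compH]; simp⟩

instance andIso {A B C D : Frm} (f : A ⟶ B) (g : C ⟶ D) [IsIso f] [IsIso g] : IsIso (f ⊼ g) :=
  ⟨inv f ⊼ inv g, by rw [← and_compH]; simp, by rw [← and_compH]; simp⟩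

theorem or_cancel_r {A B : Frm} {f g : A ⟶ B} (h : f ⊻ 𝟙 Frm.bot = g ⊻ 𝟙 Frm.bot) : f = g := by
  have hf := nat_ro f
  rw [h, nat_ro g] at hf
  exact ((cancel_epi (ro A)).1 hf).symm

theorem or_cancel_l {A B : Frm} {f g : A ⟶ B} (h : 𝟙 Frm.bot ⊻ f = 𝟙 Frm.bot ⊻ g) : f = g := by
  have hf := nat_lo f
  rw [h, nat_lo g] at hf
  exact ((cancel_epi (lo A)).1 hf).symm

theorem and_cancel_r {A B : Frm} {f g : A ⟶ B} (h : f ⊼ 𝟙 Frm.top = g ⊼ 𝟙 Frm.top) : f = g := by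
  have hf := nat_ra f
  rw [h, nat_ra g] at hf
  exact ((cancel_epi (ra A)).1 hf).symm

theorem and_cancel_l {A B : Frm} {f g : A ⟶ B} (h : 𝟙 Frm.top ⊼ f = 𝟙 Frm.top ⊼ g) : f = g := by
  have hf := nat_la f
  rw [h, nat_la g] at hf
  exact ((cancel_epi (la A)).1 hf).symm

-- Kelly's lemmas for the ∨-monoidal structure
theorem K1o (A : Frm) : ro A ⊻ 𝟙 Frm.bot = ro (A.or Frm.bot) :=
  (cancel_mono (ro A)).1 (nat_ro (ro A))

theorem K1l (A : Frm) : 𝟙 Frm.bot ⊻ lo A = lo (Frm.bot.or A) :=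
  (cancel_mono (lo A)).1 (nat_lo (lo A))

theorem K1a (A : Frm) : ra A ⊼ 𝟙 Frm.top = ra (A.and Frm.top) :=
  (cancel_mono (ra A)).1 (nat_ra (ra A))

theorem K1la (A : Frm) : 𝟙 Frm.top ⊼ la A = la (Frm.top.and A) :=
  (cancel_mono (la A)).1 (nat_la (la A))

theorem KL2o (A B : Frm) : ao A B Frm.bot ≫ ro (A.or B) = 𝟙 A ⊻ ro B := by
  apply or_cancel_r
  apply (cancel_epi ((𝟙 A ⊻ ao B Frm.bot Frm.bot) ≫ ao A (B.or Frm.bot) Frm.bot)).1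
  calc ((𝟙 A ⊻ ao B Frm.bot Frm.bot) ≫ ao A (B.or Frm.bot) Frm.bot) ≫
        ((ao A B Frm.bot ≫ ro (A.or B)) ⊻ 𝟙 Frm.bot)
      = ((𝟙 A ⊻ ao B Frm.bot Frm.bot) ≫ ao A (B.or Frm.bot) Frm.bot ≫ (ao A B Frm.bot ⊻ 𝟙 Frm.bot))
          ≫ (ro (A.or B) ⊻ 𝟙 Frm.bot) := by
        rw [← Category.id_comp (𝟙 Frm.bot), or_compH]; simp
    _ = (ao A B (Frm.bot.or Frm.bot) ≫ ao (A.or B) Frm.bot Frm.bot) ≫ (ro (A.or B) ⊻ 𝟙 Frm.bot) := by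
        rw [pent_o]; simp
    _ = ao A B (Frm.bot.or Frm.bot) ≫ (𝟙 (A.or B) ⊻ lo Frm.bot) := by
        rw [Category.assoc, tri_o]
    _ = (𝟙 A ⊻ (𝟙 B ⊻ lo Frm.bot)) ≫ ao A B Frm.bot := by
        have := nat_ao (𝟙 A) (𝟙 B) (lo Frm.bot); simp only [or_idH] at this; rw [this]
    _ = ((𝟙 A ⊻ ao B Frm.bot Frm.bot) ≫ ao A (B.or Frm.bot) Frm.bot) ≫
          ((𝟙 A ⊻ ro B) ⊻ 𝟙 Frm.bot) := by
        have h1 := nat_ao (𝟙 A) (ro B) (𝟙 Frm.bot)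
        rw [Category.assoc, ← h1, ← Category.assoc, ← or_compH, Category.id_comp,
          ← tri_o B Frm.bot]

theorem KL1o (A B : Frm) : ao Frm.bot A B ≫ (lo A ⊻ 𝟙 B) = lo (A.or B) := by
  apply or_cancel_l
  apply (cancel_mono (ao Frm.bot A B)).1
  calc (𝟙 Frm.bot ⊻ (ao Frm.bot A B ≫ (lo A ⊻ 𝟙 B))) ≫ ao Frm.bot A B
      = ((𝟙 Frm.bot ⊻ ao Frm.bot A B) ≫ (𝟙 Frm.bot ⊻ ((lo A ⊻ 𝟙 B)))) ≫ ao Frm.bot A B := by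
        rw [← or_compH]; simp
    _ = (𝟙 Frm.bot ⊻ ao Frm.bot A B) ≫ ao Frm.bot (Frm.bot.or A) B ≫ ((𝟙 Frm.bot ⊻ lo A) ⊻ 𝟙 B) := by
        rw [Category.assoc, nat_ao]
    _ = (𝟙 Frm.bot ⊻ ao Frm.bot A B) ≫ ao Frm.bot (Frm.bot.or A) B ≫
          ((ao Frm.bot Frm.bot A ≫ (ro Frm.bot ⊻ 𝟙 A)) ⊻ 𝟙 B) := by rw [tri_o]
    _ = ((𝟙 Frm.bot ⊻ ao Frm.bot A B) ≫ ao Frm.bot (Frm.bot.or A) B ≫ (ao Frm.bot Frm.bot A ⊻ 𝟙 B))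
          ≫ ((ro Frm.bot ⊻ 𝟙 A) ⊻ 𝟙 B) := by
        rw [← Category.id_comp (𝟙 B), or_compH]; simp
    _ = (ao Frm.bot Frm.bot (A.or B) ≫ ao (Frm.bot.or Frm.bot) A B) ≫ ((ro Frm.bot ⊻ 𝟙 A) ⊻ 𝟙 B) := by
        rw [pent_o]; simp
    _ = ao Frm.bot Frm.bot (A.or B) ≫ (ro Frm.bot ⊻ (𝟙 A ⊻ 𝟙 B)) ≫ ao Frm.bot A B := by
        rw [Category.assoc, ← nat_ao]
    _ = (ao Frm.bot Frm.bot (A.or B) ≫ (ro Frm.bot ⊻ 𝟙 (A.or B))) ≫ ao Frm.bot A B := by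
        simp
    _ = (𝟙 Frm.bot ⊻ lo (A.or B)) ≫ ao Frm.bot A B := by rw [tri_o]

theorem KL2a (A B : Frm) : aa A B Frm.top ≫ ra (A.and B) = 𝟙 A ⊼ ra B := by
  apply and_cancel_r
  apply (cancel_epi ((𝟙 A ⊼ aa B Frm.top Frm.top) ≫ aa A (B.and Frm.top) Frm.top)).1
  calc ((𝟙 A ⊼ aa B Frm.top Frm.top) ≫ aa A (B.and Frm.top) Frm.top) ≫
        ((aa A B Frm.top ≫ ra (A.and B)) ⊼ 𝟙 Frm.top)
      = ((𝟙 A ⊼ aa B Frm.top Frm.top) ≫ aa A (B.and Frm.top) Frm.top ≫ (aa A B Frm.top ⊼ 𝟙 Frm.top))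
          ≫ (ra (A.and B) ⊼ 𝟙 Frm.top) := by
        rw [← Category.id_comp (𝟙 Frm.top), and_compH]; simp
    _ = (aa A B (Frm.top.and Frm.top) ≫ aa (A.and B) Frm.top Frm.top) ≫ (ra (A.and B) ⊼ 𝟙 Frm.top) := by
        rw [pent_a]; simp
    _ = aa A B (Frm.top.and Frm.top) ≫ (𝟙 (A.and B) ⊼ la Frm.top) := by
        rw [Category.assoc, tri_a]
    _ = (𝟙 A ⊼ (𝟙 B ⊼ la Frm.top)) ≫ aa A B Frm.top := by
        have := nat_aa (𝟙 A) (𝟙 B) (la Frm.top); simp only [and_idH] at this; rw [this]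
    _ = ((𝟙 A ⊼ aa B Frm.top Frm.top) ≫ aa A (B.and Frm.top) Frm.top) ≫
          ((𝟙 A ⊼ ra B) ⊼ 𝟙 Frm.top) := by
        have h1 := nat_aa (𝟙 A) (ra B) (𝟙 Frm.top)
        rw [Category.assoc, ← h1, ← Category.assoc, ← and_compH, Category.id_comp,
          ← tri_a B Frm.top]

theorem KL1a (A B : Frm) : aa Frm.top A B ≫ (la A ⊼ 𝟙 B) = la (A.and B) := by
  apply and_cancel_l
  apply (cancel_mono (aa Frm.top A B)).1
  calc (𝟙 Frm.top ⊼ (aa Frm.top A B ≫ (la A ⊼ 𝟙 B))) ≫ aa Frm.top A B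
      = ((𝟙 Frm.top ⊼ aa Frm.top A B) ≫ (𝟙 Frm.top ⊼ ((la A ⊼ 𝟙 B)))) ≫ aa Frm.top A B := by
        rw [← and_compH]; simp
    _ = (𝟙 Frm.top ⊼ aa Frm.top A B) ≫ aa Frm.top (Frm.top.and A) B ≫ ((𝟙 Frm.top ⊼ la A) ⊼ 𝟙 B) := by
        rw [Category.assoc, nat_aa]
    _ = (𝟙 Frm.top ⊼ aa Frm.top A B) ≫ aa Frm.top (Frm.top.and A) B ≫
          ((aa Frm.top Frm.top A ≫ (ra Frm.top ⊼ 𝟙 A)) ⊼ 𝟙 B) := by rw [tri_a]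
    _ = ((𝟙 Frm.top ⊼ aa Frm.top A B) ≫ aa Frm.top (Frm.top.and A) B ≫ (aa Frm.top Frm.top A ⊼ 𝟙 B))
          ≫ ((ra Frm.top ⊼ 𝟙 A) ⊼ 𝟙 B) := by
        rw [← Category.id_comp (𝟙 B), and_compH]; simp
    _ = (aa Frm.top Frm.top (A.and B) ≫ aa (Frm.top.and Frm.top) A B) ≫ ((ra Frm.top ⊼ 𝟙 A) ⊼ 𝟙 B) := by
        rw [pent_a]; simp
    _ = aa Frm.top Frm.top (A.and B) ≫ (ra Frm.top ⊼ (𝟙 A ⊼ 𝟙 B)) ≫ aa Frm.top A B := by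
        rw [Category.assoc, ← nat_aa]
    _ = (aa Frm.top Frm.top (A.and B) ≫ (ra Frm.top ⊼ 𝟙 (A.and B))) ≫ aa Frm.top A B := by
        simp
    _ = (𝟙 Frm.top ⊼ la (A.and B)) ≫ aa Frm.top A B := by rw [tri_a]

theorem L1o : lo Frm.bot = ro Frm.bot := by
  apply or_cancel_l
  rw [← tri_o Frm.bot Frm.bot, K1o, KL2o]

theorem L1a : la Frm.top = ra Frm.top := by
  apply and_cancel_l
  rw [← tri_a Frm.top Frm.top, K1a, KL2a]

theorem sig_o' (A : Frm) : co A Frm.bot ≫ lo A = ro A := by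
  rw [sig_o, ← Category.assoc, co_co, Category.id_comp]

theorem sig_a' (A : Frm) : ca A Frm.top ≫ la A = ra A := by
  rw [sig_a, ← Category.assoc, ca_ca, Category.id_comp]

theorem co_wo : co Frm.top Frm.top ≫ wo = wo := by rw [q_diag12]; simp
theorem ca_wa : ca Frm.bot Frm.bot ≫ wa = wa := by rw [q_diag13]; simp

theorem d9a : (𝟙 Frm.top ⊻ kq) ≫ wo = ro Frm.top := by rw [q_diag9]; simp
theorem d10a : (𝟙 Frm.bot ⊼ kq) ≫ ra Frm.bot = wa := by rw [q_diag10]; simp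

theorem d9b : (kq ⊻ 𝟙 Frm.top) ≫ wo = lo Frm.top := by
  apply (cancel_epi (co Frm.top Frm.bot)).1
  rw [← Category.assoc, ← nat_co (𝟙 Frm.top) kq, Category.assoc, co_wo, d9a, ← sig_o']

theorem d10b : (kq ⊼ 𝟙 Frm.bot) ≫ la Frm.bot = wa := by
  apply (cancel_epi (ca Frm.bot Frm.bot)).1
  rw [← Category.assoc, ← nat_ca (𝟙 Frm.bot) kq, Category.assoc, ca_wa]
  have : ca Frm.bot Frm.top ≫ la Frm.bot = ra Frm.bot := by
    rw [sig_a, ← Category.assoc, ca_ca, Category.id_comp]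
  rw [this, d10a]

-- Boolean values and canonical objects
def O : Bool → Frm
  | false => Frm.bot
  | true => Frm.top

def val : Frm → Bool
  | .pl _ => true
  | .bot => false
  | .top => true
  | .or A B => val A || val B
  | .and A B => val A && val B

def oV : ∀ (a b : Bool), (O a).or (O b) ⟶ O (a || b)
  | false, false => ro Frm.bot
  | false, true => lo Frm.top
  | true, false => ro Frm.top
  | true, true => wo

def eV : ∀ (a b : Bool), (O a).and (O b) ⟶ O (a && b)
  | false, false => wa
  | false, true => ra Frm.bot
  | true, false => la Frm.bot
  | true, true => ra Frm.top

def oV' : ∀ (a b : Bool), O (a || b) ⟶ (O a).or (O b)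
  | false, false => ro' Frm.bot
  | false, true => lo' Frm.top
  | true, false => ro' Frm.top
  | true, true => wo'

def eV' : ∀ (a b : Bool), O (a && b) ⟶ (O a).and (O b)
  | false, false => wa'
  | false, true => ra' Frm.bot
  | true, false => la' Frm.bot
  | true, true => ra' Frm.top

def st : ∀ (a b : Bool), (a = true → b = true) → (O a ⟶ O b)
  | false, false, _ => 𝟙 _
  | false, true, _ => kq
  | true, true, _ => 𝟙 _
  | true, false, h => nomatch h rfl

@[simp] theorem st_refl (a : Bool) (h : a = true → a = true) : st a a h = 𝟙 (O a) := by
  cases a <;> rfl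

theorem st_tr (a b c : Bool) (h1 : a = true → b = true) (h2 : b = true → c = true)
    (h3 : a = true → c = true) : st a b h1 ≫ st b c h2 = st a c h3 := by
  cases a <;> cases b <;> cases c <;>
    first
    | exact Bool.noConfusion (h1 rfl)
    | exact Bool.noConfusion (h2 rfl)
    | simp [st, O]

@[simp] theorem oV_oV' (a b : Bool) : oV a b ≫ oV' a b = 𝟙 _ := by
  cases a <;> cases b
  exacts [ro'_ro _, lo'_lo _, ro'_ro _, wo'_wo]

@[simp] theorem eV_eV' (a b : Bool) : eV a b ≫ eV' a b = 𝟙 _ := by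
  cases a <;> cases b
  exacts [wa'_wa, ra'_ra _, la'_la _, ra'_ra _]

theorem st_or (a1 b1 a2 b2 : Bool) (h1 : a1 = true → b1 = true) (h2 : a2 = true → b2 = true)
    (h3 : (a1 || a2) = true → (b1 || b2) = true) :
    (st a1 b1 h1 ⊻ st a2 b2 h2) ≫ oV b1 b2 = oV a1 a2 ≫ st (a1 || a2) (b1 || b2) h3 := by
  cases a1 <;> cases b1 <;> (try exact Bool.noConfusion (h1 rfl)) <;>
    cases a2 <;> cases b2 <;> (try exact Bool.noConfusion (h2 rfl))
  · show (𝟙 Frm.bot ⊻ 𝟙 Frm.bot) ≫ ro Frm.bot = ro Frm.bot ≫ 𝟙 _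
    simp
  · show (𝟙 Frm.bot ⊻ kq) ≫ lo Frm.top = ro Frm.bot ≫ kq
    rw [nat_lo kq, L1o]
  · show (𝟙 Frm.bot ⊻ 𝟙 Frm.top) ≫ oV false true = oV false true ≫ 𝟙 _
    simp; exact Category.id_comp _
  · show (kq ⊻ 𝟙 Frm.bot) ≫ ro Frm.top = ro Frm.bot ≫ kq
    exact nat_ro kq
  · show (kq ⊻ kq) ≫ wo = ro Frm.bot ≫ kq
    have hsplit : (kq ⊻ kq) = (kq ⊻ 𝟙 Frm.bot) ≫ (𝟙 Frm.top ⊻ kq) := by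
      rw [← or_compH]; simp
    rw [hsplit, Category.assoc, d9a, nat_ro kq]
  · show (kq ⊻ 𝟙 Frm.top) ≫ wo = lo Frm.top ≫ 𝟙 _
    rw [d9b]; simp
  · show (𝟙 Frm.top ⊻ 𝟙 Frm.bot) ≫ oV true false = oV true false ≫ 𝟙 _
    simp; exact Category.id_comp _
  · show (𝟙 Frm.top ⊻ kq) ≫ wo = ro Frm.top ≫ 𝟙 _
    rw [d9a]; simp
  · show (𝟙 Frm.top ⊻ 𝟙 Frm.top) ≫ wo = wo ≫ 𝟙 _
    simp

theorem st_and (a1 b1 a2 b2 : Bool) (h1 : a1 = true → b1 = true) (h2 : a2 = true → b2 = true)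
    (h3 : (a1 && a2) = true → (b1 && b2) = true) :
    (st a1 b1 h1 ⊼ st a2 b2 h2) ≫ eV b1 b2 = eV a1 a2 ≫ st (a1 && a2) (b1 && b2) h3 := by
  cases a1 <;> cases b1 <;> (try exact Bool.noConfusion (h1 rfl)) <;>
    cases a2 <;> cases b2 <;> (try exact Bool.noConfusion (h2 rfl))
  · show (𝟙 Frm.bot ⊼ 𝟙 Frm.bot) ≫ wa = wa ≫ 𝟙 _
    simp
  · show (𝟙 Frm.bot ⊼ kq) ≫ ra Frm.bot = wa ≫ 𝟙 _
    rw [d10a]; simp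
  · show (𝟙 Frm.bot ⊼ 𝟙 Frm.top) ≫ ra Frm.bot = ra Frm.bot ≫ 𝟙 _
    simp
  · show (kq ⊼ 𝟙 Frm.bot) ≫ la Frm.bot = wa ≫ 𝟙 _
    rw [d10b]; simp
  · show (kq ⊼ kq) ≫ ra Frm.top = wa ≫ kq
    have hsplit : (kq ⊼ kq) = (𝟙 Frm.bot ⊼ kq) ≫ (kq ⊼ 𝟙 Frm.top) := by
      rw [← and_compH]; simp
    rw [hsplit, Category.assoc, nat_ra kq, ← Category.assoc, d10a]
  · show (kq ⊼ 𝟙 Frm.top) ≫ ra Frm.top = ra Frm.bot ≫ kq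
    exact nat_ra kq
  · show (𝟙 Frm.top ⊼ 𝟙 Frm.bot) ≫ la Frm.bot = la Frm.bot ≫ 𝟙 _
    simp
  · show (𝟙 Frm.top ⊼ kq) ≫ ra Frm.top = la Frm.bot ≫ kq
    rw [← L1a, nat_la kq]
  · show (𝟙 Frm.top ⊼ 𝟙 Frm.top) ≫ ra Frm.top = ra Frm.top ≫ 𝟙 _
    simp

theorem oV_co (a b : Bool) (h : (a || b) = true → (b || a) = true) :
    co (O a) (O b) ≫ oV b a = oV a b ≫ st (a || b) (b || a) h := by
  cases a <;> cases b
  · show co Frm.bot Frm.bot ≫ ro Frm.bot = ro Frm.bot ≫ 𝟙 _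
    rw [← sig_o, L1o]; simp
  · show co Frm.bot Frm.top ≫ ro Frm.top = lo Frm.top ≫ 𝟙 _
    rw [← sig_o]; simp
  · show co Frm.top Frm.bot ≫ lo Frm.top = ro Frm.top ≫ 𝟙 _
    rw [sig_o']; simp
  · show co Frm.top Frm.top ≫ wo = wo ≫ 𝟙 _
    rw [co_wo]; simp

theorem eV_ca (a b : Bool) (h : (a && b) = true → (b && a) = true) :
    ca (O a) (O b) ≫ eV b a = eV a b ≫ st (a && b) (b && a) h := by
  cases a <;> cases b
  · show ca Frm.bot Frm.bot ≫ wa = wa ≫ 𝟙 _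
    rw [ca_wa]; simp
  · show ca Frm.bot Frm.top ≫ la Frm.bot = ra Frm.bot ≫ 𝟙 _
    rw [sig_a']; simp
  · show ca Frm.top Frm.bot ≫ ra Frm.bot = la Frm.bot ≫ 𝟙 _
    rw [← sig_a]; simp
  · show ca Frm.top Frm.top ≫ ra Frm.top = ra Frm.top ≫ 𝟙 _
    rw [← L1a, sig_a', L1a]; simp

theorem oV_assoc (a b c : Bool) (h : (a || (b || c)) = true → ((a || b) || c) = true) :
    ao (O a) (O b) (O c) ≫ (oV a b ⊻ 𝟙 (O c)) ≫ oV (a || b) c =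
      (𝟙 (O a) ⊻ oV b c) ≫ oV a (b || c) ≫ st (a || (b || c)) ((a || b) || c) h := by
  cases a <;> cases b <;> cases c
  · show ao Frm.bot Frm.bot Frm.bot ≫ (ro Frm.bot ⊻ 𝟙 Frm.bot) ≫ ro Frm.bot =
      (𝟙 Frm.bot ⊻ ro Frm.bot) ≫ ro Frm.bot ≫ 𝟙 _
    rw [← Category.assoc, tri_o, L1o]; simp
  · show ao Frm.bot Frm.bot Frm.top ≫ (ro Frm.bot ⊻ 𝟙 Frm.top) ≫ lo Frm.top =
      (𝟙 Frm.bot ⊻ lo Frm.top) ≫ lo Frm.top ≫ 𝟙 _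
    rw [← Category.assoc, tri_o]; simp
  · show ao Frm.bot Frm.top Frm.bot ≫ (lo Frm.top ⊻ 𝟙 Frm.bot) ≫ ro Frm.top =
      (𝟙 Frm.bot ⊻ ro Frm.top) ≫ lo Frm.top ≫ 𝟙 _
    rw [nat_ro (lo Frm.top), ← Category.assoc, KL2o]; simp
  · show ao Frm.bot Frm.top Frm.top ≫ (lo Frm.top ⊻ 𝟙 Frm.top) ≫ wo =
      (𝟙 Frm.bot ⊻ wo) ≫ lo Frm.top ≫ 𝟙 _
    rw [← Category.assoc, KL1o, ← nat_lo wo]; simp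
  · show ao Frm.top Frm.bot Frm.bot ≫ (ro Frm.top ⊻ 𝟙 Frm.bot) ≫ ro Frm.top =
      (𝟙 Frm.top ⊻ ro Frm.bot) ≫ ro Frm.top ≫ 𝟙 _
    rw [← Category.assoc, tri_o, L1o]; simp
  · show ao Frm.top Frm.bot Frm.top ≫ (ro Frm.top ⊻ 𝟙 Frm.top) ≫ wo =
      (𝟙 Frm.top ⊻ lo Frm.top) ≫ wo ≫ 𝟙 _
    rw [← Category.assoc, tri_o]; simp
  · show ao Frm.top Frm.top Frm.bot ≫ (wo ⊻ 𝟙 Frm.bot) ≫ ro Frm.top =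
      (𝟙 Frm.top ⊻ ro Frm.top) ≫ wo ≫ 𝟙 _
    rw [nat_ro wo, ← Category.assoc, KL2o]; simp
  · show ao Frm.top Frm.top Frm.top ≫ (wo ⊻ 𝟙 Frm.top) ≫ wo =
      (𝟙 Frm.top ⊻ wo) ≫ wo ≫ 𝟙 _
    rw [q_diag7]
    have h1 : (wo' ⊻ 𝟙 Frm.top) ≫ (wo ⊻ 𝟙 Frm.top) = 𝟙 _ := by
      rw [← or_compH]; simp
    have h2 : (wo' ⊻ 𝟙 Frm.top) ≫ ((wo ⊻ 𝟙 Frm.top) ≫ wo) = wo := by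
      rw [← Category.assoc, h1, Category.id_comp]
    rw [Category.assoc, h2]; simp

theorem eV_assoc (a b c : Bool) (h : (a && (b && c)) = true → ((a && b) && c) = true) :
    aa (O a) (O b) (O c) ≫ (eV a b ⊼ 𝟙 (O c)) ≫ eV (a && b) c =
      (𝟙 (O a) ⊼ eV b c) ≫ eV a (b && c) ≫ st (a && (b && c)) ((a && b) && c) h := by
  cases a <;> cases b <;> cases c
  · show aa Frm.bot Frm.bot Frm.bot ≫ (wa ⊼ 𝟙 Frm.bot) ≫ wa =
      (𝟙 Frm.bot ⊼ wa) ≫ wa ≫ 𝟙 _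
    rw [q_diag8]
    have h1 : (wa' ⊼ 𝟙 Frm.bot) ≫ (wa ⊼ 𝟙 Frm.bot) = 𝟙 _ := by
      rw [← and_compH]; simp
    have h2 : (wa' ⊼ 𝟙 Frm.bot) ≫ ((wa ⊼ 𝟙 Frm.bot) ≫ wa) = wa := by
      rw [← Category.assoc, h1, Category.id_comp]
    rw [Category.assoc, h2]; simp
  · show aa Frm.bot Frm.bot Frm.top ≫ (wa ⊼ 𝟙 Frm.top) ≫ ra Frm.bot =
      (𝟙 Frm.bot ⊼ ra Frm.bot) ≫ wa ≫ 𝟙 _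
    rw [nat_ra wa, ← Category.assoc, KL2a]; simp
  · show aa Frm.bot Frm.top Frm.bot ≫ (ra Frm.bot ⊼ 𝟙 Frm.bot) ≫ wa =
      (𝟙 Frm.bot ⊼ la Frm.bot) ≫ wa ≫ 𝟙 _
    rw [← Category.assoc, tri_a]; simp
  · show aa Frm.bot Frm.top Frm.top ≫ (ra Frm.bot ⊼ 𝟙 Frm.top) ≫ ra Frm.bot =
      (𝟙 Frm.bot ⊼ ra Frm.top) ≫ ra Frm.bot ≫ 𝟙 _
    rw [nat_ra (ra Frm.bot), ← Category.assoc, KL2a]; simp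
  · show aa Frm.top Frm.bot Frm.bot ≫ (la Frm.bot ⊼ 𝟙 Frm.bot) ≫ wa =
      (𝟙 Frm.top ⊼ wa) ≫ la Frm.bot ≫ 𝟙 _
    rw [← Category.assoc, KL1a, ← nat_la wa]; simp
  · show aa Frm.top Frm.bot Frm.top ≫ (la Frm.bot ⊼ 𝟙 Frm.top) ≫ ra Frm.bot =
      (𝟙 Frm.top ⊼ ra Frm.bot) ≫ la Frm.bot ≫ 𝟙 _
    rw [nat_ra (la Frm.bot), ← Category.assoc, KL2a]; simp
  · show aa Frm.top Frm.top Frm.bot ≫ (ra Frm.top ⊼ 𝟙 Frm.bot) ≫ la Frm.bot =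
      (𝟙 Frm.top ⊼ la Frm.bot) ≫ la Frm.bot ≫ 𝟙 _
    rw [← Category.assoc, tri_a]; simp
  · show aa Frm.top Frm.top Frm.top ≫ (ra Frm.top ⊼ 𝟙 Frm.top) ≫ ra Frm.top =
      (𝟙 Frm.top ⊼ ra Frm.top) ≫ ra Frm.top ≫ 𝟙 _
    rw [← Category.assoc, tri_a, L1a]; simp

theorem oV_unit_r (a : Bool) (h : (a || false) = true → a = true) :
    oV a false ≫ st (a || false) a h = ro (O a) := by
  cases a
  · show ro Frm.bot ≫ 𝟙 _ = ro Frm.bot; simp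
  · show ro Frm.top ≫ 𝟙 _ = ro Frm.top; simp

theorem oV_unit_l (a : Bool) (h : (false || a) = true → a = true) :
    oV false a ≫ st (false || a) a h = lo (O a) := by
  cases a
  · show ro Frm.bot ≫ 𝟙 _ = lo Frm.bot; rw [L1o]; simp
  · show lo Frm.top ≫ 𝟙 _ = lo Frm.top; simp

theorem eV_unit_r (a : Bool) (h : (a && true) = true → a = true) :
    eV a true ≫ st (a && true) a h = ra (O a) := by
  cases a
  · show ra Frm.bot ≫ 𝟙 _ = ra Frm.bot; simp
  · show ra Frm.top ≫ 𝟙 _ = ra Frm.top; simp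

theorem eV_unit_l (a : Bool) (h : (true && a) = true → a = true) :
    eV true a ≫ st (true && a) a h = la (O a) := by
  cases a
  · show la Frm.bot ≫ 𝟙 _ = la Frm.bot; simp
  · show ra Frm.top ≫ 𝟙 _ = la Frm.top; rw [L1a]; simp

theorem co_ro_bb : co Frm.bot Frm.bot ≫ ro Frm.bot = ro Frm.bot := by
  rw [← sig_o, L1o]

theorem ca_ra_top : ca Frm.top Frm.top ≫ ra Frm.top = ra Frm.top := by
  rw [← L1a, sig_a', L1a]

theorem ck_bb' {A B C : Frm} (u : (A.and B) ⟶ C) :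
    ik A B Frm.bot Frm.bot ≫ ((ro A ⊼ ro B) ≫ u) = (u ⊻ wa) ≫ ro C := by
  rw [q_diag5]
  have h1 : (ro' A ⊼ ro' B) ≫ ((ro A ⊼ ro B) ≫ u) = u := by
    rw [← Category.assoc, ← and_compH]; simp
  rw [Category.assoc, h1, Category.assoc, ← nat_ro u, ← Category.assoc, ← or_compH]
  simp

theorem ck_tt' {A B C : Frm} (u : (A.or B) ⟶ C) :
    ik A Frm.top B Frm.top ≫ ((u ⊼ wo) ≫ ra C) = (ra A ⊻ ra B) ≫ u := by
  rw [q_diag6]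
  have h1 : (𝟙 (A.or B) ⊼ wo') ≫ ((u ⊼ wo) ≫ ra C) = (u ⊼ 𝟙 Frm.top) ≫ ra C := by
    rw [← Category.assoc, ← and_compH]; simp
  rw [Category.assoc, h1, nat_ra u, Category.assoc, ← Category.assoc (ra' (A.or B)),
    ra_ra', Category.id_comp]

theorem ik_co (A B C D : Frm) :
    ik B D A C = co (B.and D) (A.and C) ≫ (ik A C B D ≫ (co A B ⊼ co C D)) := by
  rw [← q_diag4, ← Category.assoc, co_co, Category.id_comp]

theorem ik_ca (A B C D : Frm) :
    ik B A D C = (ca B A ⊻ ca D C) ≫ (ik A B C D ≫ ca (A.or C) (B.or D)) := by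
  rw [q_diag3, ← Category.assoc, ← or_compH, ca_ca, ca_ca, or_idH, Category.id_comp]

theorem ck_k : ik Frm.top Frm.bot Frm.bot Frm.top ≫
      ((ro Frm.top ⊼ lo Frm.top) ≫ ra Frm.top) =
    (la Frm.bot ⊻ ra Frm.bot) ≫ (ro Frm.bot ≫ kq) := by
  rw [q_diag11]
  have h1 : (ro' Frm.top ⊼ lo' Frm.top) ≫ ((ro Frm.top ⊼ lo Frm.top) ≫ ra Frm.top) =
      ra Frm.top := by
    rw [← Category.assoc, ← and_compH]; simp
  simp only [Category.assoc]
  rw [h1, ra_ra']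
  simp

theorem ckV (a b c d : Bool)
    (h : ((a && b) || (c && d)) = true → ((a || c) && (b || d)) = true) :
    ik (O a) (O b) (O c) (O d) ≫ ((oV a c ⊼ oV b d) ≫ eV (a || c) (b || d)) =
      (eV a b ⊻ eV c d) ≫
        (oV (a && b) (c && d) ≫ st ((a && b) || (c && d)) ((a || c) && (b || d)) h) := by
  cases a <;> cases b <;> cases c <;> cases d
  · -- ffff
    show ik Frm.bot Frm.bot Frm.bot Frm.bot ≫ ((ro Frm.bot ⊼ ro Frm.bot) ≫ wa) =
      (wa ⊻ wa) ≫ (ro Frm.bot ≫ 𝟙 Frm.bot)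
    rw [ck_bb']; simp
  · -- ffft
    show ik Frm.bot Frm.bot Frm.bot Frm.top ≫ ((ro Frm.bot ⊼ lo Frm.top) ≫ ra Frm.bot) =
      (wa ⊻ ra Frm.bot) ≫ (ro Frm.bot ≫ 𝟙 Frm.bot)
    rw [ik_co Frm.bot Frm.bot Frm.top Frm.bot]
    have hmid : (co Frm.bot Frm.bot ⊼ co Frm.top Frm.bot) ≫
        ((ro Frm.bot ⊼ lo Frm.top) ≫ ra Frm.bot) = (ro Frm.bot ⊼ ro Frm.top) ≫ ra Frm.bot := by
      rw [← Category.assoc, ← and_compH, co_ro_bb, sig_o']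
    simp only [Category.assoc]
    rw [hmid, ck_bb' (ra Frm.bot), ← Category.assoc, ← nat_co wa (ra Frm.bot),
      Category.assoc, co_ro_bb]
    simp
  · -- fftf
    show ik Frm.bot Frm.bot Frm.top Frm.bot ≫ ((lo Frm.top ⊼ ro Frm.bot) ≫ la Frm.bot) =
      (wa ⊻ la Frm.bot) ≫ (ro Frm.bot ≫ 𝟙 Frm.bot)
    rw [ik_co Frm.top Frm.bot Frm.bot Frm.bot]
    have hmid : (co Frm.top Frm.bot ⊼ co Frm.bot Frm.bot) ≫
        ((lo Frm.top ⊼ ro Frm.bot) ≫ la Frm.bot) = (ro Frm.top ⊼ ro Frm.bot) ≫ la Frm.bot := by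
      rw [← Category.assoc, ← and_compH, co_ro_bb, sig_o']
    simp only [Category.assoc]
    rw [hmid, ck_bb' (la Frm.bot), ← Category.assoc, ← nat_co wa (la Frm.bot),
      Category.assoc, co_ro_bb]
    simp
  · -- fftt
    show ik Frm.bot Frm.bot Frm.top Frm.top ≫ ((lo Frm.top ⊼ lo Frm.top) ≫ ra Frm.top) =
      (wa ⊻ ra Frm.top) ≫ (lo Frm.top ≫ 𝟙 Frm.top)
    rw [ik_co Frm.top Frm.bot Frm.top Frm.bot]
    have hmid : (co Frm.top Frm.bot ⊼ co Frm.top Frm.bot) ≫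
        ((lo Frm.top ⊼ lo Frm.top) ≫ ra Frm.top) = (ro Frm.top ⊼ ro Frm.top) ≫ ra Frm.top := by
      rw [← Category.assoc, ← and_compH, sig_o']
    simp only [Category.assoc]
    rw [hmid, ck_bb' (ra Frm.top), ← Category.assoc, ← nat_co wa (ra Frm.top),
      Category.assoc, ← sig_o]
    simp
  · -- ftff
    show ik Frm.bot Frm.top Frm.bot Frm.bot ≫ ((ro Frm.bot ⊼ ro Frm.top) ≫ ra Frm.bot) =
      (ra Frm.bot ⊻ wa) ≫ (ro Frm.bot ≫ 𝟙 Frm.bot)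
    rw [ck_bb']; simp
  · -- ftft
    show ik Frm.bot Frm.top Frm.bot Frm.top ≫ ((ro Frm.bot ⊼ wo) ≫ ra Frm.bot) =
      (ra Frm.bot ⊻ ra Frm.bot) ≫ (ro Frm.bot ≫ 𝟙 Frm.bot)
    rw [ck_tt']; simp
  · -- fttf
    show ik Frm.bot Frm.top Frm.top Frm.bot ≫ ((lo Frm.top ⊼ ro Frm.top) ≫ ra Frm.top) =
      (ra Frm.bot ⊻ la Frm.bot) ≫ (ro Frm.bot ≫ kq)
    rw [ik_co Frm.top Frm.bot Frm.bot Frm.top]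
    have hmid : (co Frm.top Frm.bot ⊼ co Frm.bot Frm.top) ≫
        ((lo Frm.top ⊼ ro Frm.top) ≫ ra Frm.top) = (ro Frm.top ⊼ lo Frm.top) ≫ ra Frm.top := by
      rw [← Category.assoc, ← and_compH, sig_o', ← sig_o]
    simp only [Category.assoc]
    rw [hmid, ck_k, ← Category.assoc, ← nat_co (ra Frm.bot) (la Frm.bot),
      Category.assoc, ← Category.assoc (co Frm.bot Frm.bot), co_ro_bb]
  · -- fttt
    show ik Frm.bot Frm.top Frm.top Frm.top ≫ ((lo Frm.top ⊼ wo) ≫ ra Frm.top) =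
      (ra Frm.bot ⊻ ra Frm.top) ≫ (lo Frm.top ≫ 𝟙 Frm.top)
    rw [ck_tt']; simp
  · -- tfff
    show ik Frm.top Frm.bot Frm.bot Frm.bot ≫ ((ro Frm.top ⊼ ro Frm.bot) ≫ la Frm.bot) =
      (la Frm.bot ⊻ wa) ≫ (ro Frm.bot ≫ 𝟙 Frm.bot)
    rw [ck_bb']; simp
  · -- tfft
    show ik Frm.top Frm.bot Frm.bot Frm.top ≫ ((ro Frm.top ⊼ lo Frm.top) ≫ ra Frm.top) =
      (la Frm.bot ⊻ ra Frm.bot) ≫ (ro Frm.bot ≫ kq)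
    exact ck_k
  · -- tftf
    show ik Frm.top Frm.bot Frm.top Frm.bot ≫ ((wo ⊼ ro Frm.bot) ≫ la Frm.bot) =
      (la Frm.bot ⊻ la Frm.bot) ≫ (ro Frm.bot ≫ 𝟙 Frm.bot)
    rw [ik_ca Frm.bot Frm.top Frm.bot Frm.top]
    have hmid : ca (Frm.bot.or Frm.bot) (Frm.top.or Frm.top) ≫ ((wo ⊼ ro Frm.bot) ≫ la Frm.bot) =
        (ro Frm.bot ⊼ wo) ≫ ra Frm.bot := by
      rw [← Category.assoc, ← nat_ca (ro Frm.bot) wo, Category.assoc, sig_a']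
    simp only [Category.assoc]
    rw [hmid, ck_tt', ← Category.assoc, ← or_compH, ← sig_a]
    simp
  · -- tftt
    show ik Frm.top Frm.bot Frm.top Frm.top ≫ ((wo ⊼ lo Frm.top) ≫ ra Frm.top) =
      (la Frm.bot ⊻ ra Frm.top) ≫ (lo Frm.top ≫ 𝟙 Frm.top)
    rw [ik_ca Frm.bot Frm.top Frm.top Frm.top]
    have hmid : ca (Frm.bot.or Frm.top) (Frm.top.or Frm.top) ≫ ((wo ⊼ lo Frm.top) ≫ ra Frm.top) =
        (lo Frm.top ⊼ wo) ≫ ra Frm.top := by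
      rw [← Category.assoc, ← nat_ca (lo Frm.top) wo, Category.assoc, ca_ra_top]
    simp only [Category.assoc]
    rw [hmid, ck_tt', ← Category.assoc, ← or_compH, ← sig_a, ca_ra_top, ← L1a]
    simp
  · -- ttff
    show ik Frm.top Frm.top Frm.bot Frm.bot ≫ ((ro Frm.top ⊼ ro Frm.top) ≫ ra Frm.top) =
      (ra Frm.top ⊻ wa) ≫ (ro Frm.top ≫ 𝟙 Frm.top)
    rw [ck_bb']; simp
  · -- ttft
    show ik Frm.top Frm.top Frm.bot Frm.top ≫ ((ro Frm.top ⊼ wo) ≫ ra Frm.top) =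
      (ra Frm.top ⊻ ra Frm.bot) ≫ (ro Frm.top ≫ 𝟙 Frm.top)
    rw [ck_tt']; simp
  · -- tttf
    show ik Frm.top Frm.top Frm.top Frm.bot ≫ ((wo ⊼ ro Frm.top) ≫ ra Frm.top) =
      (ra Frm.top ⊻ la Frm.bot) ≫ (ro Frm.top ≫ 𝟙 Frm.top)
    rw [ik_ca Frm.top Frm.top Frm.bot Frm.top]
    have hmid : ca (Frm.top.or Frm.bot) (Frm.top.or Frm.top) ≫ ((wo ⊼ ro Frm.top) ≫ ra Frm.top) =
        (ro Frm.top ⊼ wo) ≫ ra Frm.top := by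
      rw [← Category.assoc, ← nat_ca (ro Frm.top) wo, Category.assoc, ca_ra_top]
    simp only [Category.assoc]
    rw [hmid, ck_tt', ← Category.assoc, ← or_compH, ca_ra_top, ← sig_a]
    simp
  · -- tttt
    show ik Frm.top Frm.top Frm.top Frm.top ≫ ((wo ⊼ wo) ≫ ra Frm.top) =
      (ra Frm.top ⊻ ra Frm.top) ≫ (wo ≫ 𝟙 Frm.top)
    rw [ck_tt']; simp

theorem val_mono {A B : Frm} (f : Tm A B) : val A = true → val B = true := by
  induction f <;> intro h <;> simp_all [val] <;> tauto

theorem noLtr_iff {A B : Frm} (f : Tm A B) : NoLtr A ↔ NoLtr B := by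
  induction f <;> simp_all [NoLtr]
  all_goals tauto

def tq : ∀ (A : Frm), NoLtr A → (A ⟶ O (val A))
  | .pl _, h => absurd h id
  | .bot, _ => 𝟙 _
  | .top, _ => 𝟙 _
  | .or A B, h => (tq A h.1 ⊻ tq B h.2) ≫ oV (val A) (val B)
  | .and A B, h => (tq A h.1 ⊼ tq B h.2) ≫ eV (val A) (val B)

def fq : ∀ (A : Frm), NoLtr A → (O (val A) ⟶ A)
  | .pl _, h => absurd h id
  | .bot, _ => 𝟙 _
  | .top, _ => 𝟙 _
  | .or A B, h => oV' (val A) (val B) ≫ (fq A h.1 ⊻ fq B h.2)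
  | .and A B, h => eV' (val A) (val B) ≫ (fq A h.1 ⊼ fq B h.2)

theorem tq_fq : ∀ (A : Frm) (h : NoLtr A), tq A h ≫ fq A h = 𝟙 A := by
  intro A
  induction A with
  | pl n => intro h; exact absurd h id
  | bot => intro h; show 𝟙 _ ≫ 𝟙 _ = 𝟙 _; simp
  | top => intro h; show 𝟙 _ ≫ 𝟙 _ = 𝟙 _; simp
  | or A B ihA ihB =>
    intro h
    show ((tq A h.1 ⊻ tq B h.2) ≫ oV (val A) (val B)) ≫
        (oV' (val A) (val B) ≫ (fq A h.1 ⊻ fq B h.2)) = 𝟙 _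
    rw [Category.assoc, ← Category.assoc (oV (val A) (val B)), oV_oV', Category.id_comp,
      ← or_compH, ihA, ihB, or_idH]
  | and A B ihA ihB =>
    intro h
    show ((tq A h.1 ⊼ tq B h.2) ≫ eV (val A) (val B)) ≫
        (eV' (val A) (val B) ≫ (fq A h.1 ⊼ fq B h.2)) = 𝟙 _
    rw [Category.assoc, ← Category.assoc (eV (val A) (val B)), eV_eV', Category.id_comp,
      ← and_compH, ihA, ihB, and_idH]

theorem key_flip {A B : Frm} (hA : NoLtr A) (hB : NoLtr B)
    (h1 : val A = true → val B = true) (h2 : val B = true → val A = true)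
    {f : A ⟶ B} {g : B ⟶ A} (hgf : g ≫ f = 𝟙 B)
    (hk : f ≫ tq B hB = tq A hA ≫ st (val A) (val B) h1) :
    g ≫ tq A hA = tq B hB ≫ st (val B) (val A) h2 := by
  have hB' : tq B hB = g ≫ (tq A hA ≫ st (val A) (val B) h1) := by
    rw [← hk, ← Category.assoc, hgf, Category.id_comp]
  rw [hB', Category.assoc, Category.assoc,
    st_tr (val A) (val B) (val A) h1 h2 (fun x => x), st_refl]
  simp


theorem key_ao (A B C : Frm) (hA : NoLtr (A.or (B.or C))) (hB : NoLtr ((A.or B).or C))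
    (hv : val (A.or (B.or C)) = true → val ((A.or B).or C) = true) :
    ao A B C ≫ tq ((A.or B).or C) hB =
      tq (A.or (B.or C)) hA ≫ st (val (A.or (B.or C))) (val ((A.or B).or C)) hv := by
  show ao A B C ≫
      (((tq A hB.1.1 ⊻ tq B hB.1.2) ≫ oV (val A) (val B)) ⊻ tq C hB.2) ≫
        oV (val A || val B) (val C) =
    ((tq A hA.1 ⊻ ((tq B hA.2.1 ⊻ tq C hA.2.2) ≫ oV (val B) (val C))) ≫
        oV (val A) (val B || val C)) ≫
      st (val A || (val B || val C)) ((val A || val B) || val C) hv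
  have h1 : (((tq A hB.1.1 ⊻ tq B hB.1.2) ≫ oV (val A) (val B)) ⊻ tq C hB.2) =
      ((tq A hB.1.1 ⊻ tq B hB.1.2) ⊻ tq C hB.2) ≫ (oV (val A) (val B) ⊻ 𝟙 (O (val C))) := by
    rw [← or_compH]; simp
  have h2 : (tq A hA.1 ⊻ ((tq B hA.2.1 ⊻ tq C hA.2.2) ≫ oV (val B) (val C))) =
      (tq A hA.1 ⊻ (tq B hA.2.1 ⊻ tq C hA.2.2)) ≫ (𝟙 (O (val A)) ⊻ oV (val B) (val C)) := by
    rw [← or_compH]; simp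
  rw [h1, h2, ← Category.assoc, ← Category.assoc, ← nat_ao]
  simp only [Category.assoc]
  rw [oV_assoc (val A) (val B) (val C) hv]

theorem key_aa (A B C : Frm) (hA : NoLtr (A.and (B.and C))) (hB : NoLtr ((A.and B).and C))
    (hv : val (A.and (B.and C)) = true → val ((A.and B).and C) = true) :
    aa A B C ≫ tq ((A.and B).and C) hB =
      tq (A.and (B.and C)) hA ≫ st (val (A.and (B.and C))) (val ((A.and B).and C)) hv := by
  show aa A B C ≫
      (((tq A hB.1.1 ⊼ tq B hB.1.2) ≫ eV (val A) (val B)) ⊼ tq C hB.2) ≫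
        eV (val A && val B) (val C) =
    ((tq A hA.1 ⊼ ((tq B hA.2.1 ⊼ tq C hA.2.2) ≫ eV (val B) (val C))) ≫
        eV (val A) (val B && val C)) ≫
      st (val A && (val B && val C)) ((val A && val B) && val C) hv
  have h1 : (((tq A hB.1.1 ⊼ tq B hB.1.2) ≫ eV (val A) (val B)) ⊼ tq C hB.2) =
      ((tq A hB.1.1 ⊼ tq B hB.1.2) ⊼ tq C hB.2) ≫ (eV (val A) (val B) ⊼ 𝟙 (O (val C))) := by
    rw [← and_compH]; simp
  have h2 : (tq A hA.1 ⊼ ((tq B hA.2.1 ⊼ tq C hA.2.2) ≫ eV (val B) (val C))) =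
      (tq A hA.1 ⊼ (tq B hA.2.1 ⊼ tq C hA.2.2)) ≫ (𝟙 (O (val A)) ⊼ eV (val B) (val C)) := by
    rw [← and_compH]; simp
  rw [h1, h2, ← Category.assoc, ← Category.assoc, ← nat_aa]
  simp only [Category.assoc]
  rw [eV_assoc (val A) (val B) (val C) hv]

theorem key_ro (A : Frm) (hA : NoLtr (A.or Frm.bot)) (hB : NoLtr A)
    (hv : val (A.or Frm.bot) = true → val A = true) :
    ro A ≫ tq A hB = tq (A.or Frm.bot) hA ≫ st (val (A.or Frm.bot)) (val A) hv := by
  show ro A ≫ tq A hB = ((tq A hA.1 ⊻ 𝟙 Frm.bot) ≫ oV (val A) false) ≫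
      st (val A || false) (val A) hv
  erw [Category.assoc, oV_unit_r (val A) hv, nat_ro]

theorem key_lo (A : Frm) (hA : NoLtr (Frm.bot.or A)) (hB : NoLtr A)
    (hv : val (Frm.bot.or A) = true → val A = true) :
    lo A ≫ tq A hB = tq (Frm.bot.or A) hA ≫ st (val (Frm.bot.or A)) (val A) hv := by
  show lo A ≫ tq A hB = ((𝟙 Frm.bot ⊻ tq A hA.2) ≫ oV false (val A)) ≫
      st (false || val A) (val A) hv
  erw [Category.assoc, oV_unit_l (val A) hv, nat_lo]

theorem key_ra (A : Frm) (hA : NoLtr (A.and Frm.top)) (hB : NoLtr A)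
    (hv : val (A.and Frm.top) = true → val A = true) :
    ra A ≫ tq A hB = tq (A.and Frm.top) hA ≫ st (val (A.and Frm.top)) (val A) hv := by
  show ra A ≫ tq A hB = ((tq A hA.1 ⊼ 𝟙 Frm.top) ≫ eV (val A) true) ≫
      st (val A && true) (val A) hv
  erw [Category.assoc, eV_unit_r (val A) hv, nat_ra]

theorem key_la (A : Frm) (hA : NoLtr (Frm.top.and A)) (hB : NoLtr A)
    (hv : val (Frm.top.and A) = true → val A = true) :
    la A ≫ tq A hB = tq (Frm.top.and A) hA ≫ st (val (Frm.top.and A)) (val A) hv := by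
  show la A ≫ tq A hB = ((𝟙 Frm.top ⊼ tq A hA.2) ≫ eV true (val A)) ≫
      st (true && val A) (val A) hv
  erw [Category.assoc, eV_unit_l (val A) hv, nat_la]

theorem key {A B : Frm} (f : Tm A B) (hA : NoLtr A) (hB : NoLtr B)
    (hv : val A = true → val B = true) :
    (⟦f⟧ : A ⟶ B) ≫ tq B hB = tq A hA ≫ st (val A) (val B) hv := by
  induction f with
  | id A =>
    show 𝟙 A ≫ tq A hB = tq A hA ≫ st (val A) (val A) hv
    rw [st_refl]
    simp
  | comp g f ihg ihf =>
    have hY := (noLtr_iff f).1 hA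
    show ((⟦f⟧ : _ ⟶ _) ≫ ⟦g⟧) ≫ tq _ hB = tq _ hA ≫ st _ _ hv
    rw [Category.assoc, ihg hY hB (val_mono g), ← Category.assoc, ihf hA hY (val_mono f),
      Category.assoc, st_tr _ _ _ (val_mono f) (val_mono g) hv]
  | orM f g ihf ihg =>
    rename_i A' B' C' D'
    show ((⟦f⟧ : A' ⟶ B') ⊻ (⟦g⟧ : C' ⟶ D')) ≫
        ((tq B' hB.1 ⊻ tq D' hB.2) ≫ oV (val B') (val D')) =
      ((tq A' hA.1 ⊻ tq C' hA.2) ≫ oV (val A') (val C')) ≫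
        st (val A' || val C') (val B' || val D') hv
    rw [← Category.assoc, ← or_compH, ihf hA.1 hB.1 (val_mono f), ihg hA.2 hB.2 (val_mono g),
      or_compH, Category.assoc,
      st_or (val A') (val B') (val C') (val D') (val_mono f) (val_mono g) hv,
      ← Category.assoc]
  | andM f g ihf ihg =>
    rename_i A' B' C' D'
    show ((⟦f⟧ : A' ⟶ B') ⊼ (⟦g⟧ : C' ⟶ D')) ≫
        ((tq B' hB.1 ⊼ tq D' hB.2) ≫ eV (val B') (val D')) =
      ((tq A' hA.1 ⊼ tq C' hA.2) ≫ eV (val A') (val C')) ≫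
        st (val A' && val C') (val B' && val D') hv
    rw [← Category.assoc, ← and_compH, ihf hA.1 hB.1 (val_mono f), ihg hA.2 hB.2 (val_mono g),
      and_compH, Category.assoc,
      st_and (val A') (val B') (val C') (val D') (val_mono f) (val_mono g) hv,
      ← Category.assoc]
  | bOrTo A B C => exact key_ao A B C hA hB hv
  | bOrFrom A B C =>
    exact key_flip hB hA (val_mono (Tm.bOrTo A B C)) hv (ao_ao' A B C)
      (key_ao A B C hB hA (val_mono (Tm.bOrTo A B C)))
  | bAndTo A B C => exact key_aa A B C hA hB hv
  | bAndFrom A B C =>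
    exact key_flip hB hA (val_mono (Tm.bAndTo A B C)) hv (aa_aa' A B C)
      (key_aa A B C hB hA (val_mono (Tm.bAndTo A B C)))
  | cOr A B =>
    show co A B ≫ ((tq B hB.1 ⊻ tq A hB.2) ≫ oV (val B) (val A)) =
      ((tq A hA.1 ⊻ tq B hA.2) ≫ oV (val A) (val B)) ≫
        st (val A || val B) (val B || val A) hv
    rw [← Category.assoc, ← nat_co, Category.assoc, oV_co (val A) (val B) hv,
      ← Category.assoc]
  | cAnd A B =>
    show ca A B ≫ ((tq B hB.1 ⊼ tq A hB.2) ≫ eV (val B) (val A)) =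
      ((tq A hA.1 ⊼ tq B hA.2) ≫ eV (val A) (val B)) ≫
        st (val A && val B) (val B && val A) hv
    rw [← Category.assoc, ← nat_ca, Category.assoc, eV_ca (val A) (val B) hv,
      ← Category.assoc]
  | dOrTo A => exact key_ro A hA hB hv
  | dOrFrom A =>
    exact key_flip hB hA (val_mono (Tm.dOrTo A)) hv (ro_ro' A)
      (key_ro A hB hA (val_mono (Tm.dOrTo A)))
  | sOrTo A => exact key_lo A hA hB hv
  | sOrFrom A =>
    exact key_flip hB hA (val_mono (Tm.sOrTo A)) hv (lo_lo' A)
      (key_lo A hB hA (val_mono (Tm.sOrTo A)))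
  | dAndTo A => exact key_ra A hA hB hv
  | dAndFrom A =>
    exact key_flip hB hA (val_mono (Tm.dAndTo A)) hv (ra_ra' A)
      (key_ra A hB hA (val_mono (Tm.dAndTo A)))
  | sAndTo A => exact key_la A hA hB hv
  | sAndFrom A =>
    exact key_flip hB hA (val_mono (Tm.sAndTo A)) hv (la_la' A)
      (key_la A hB hA (val_mono (Tm.sAndTo A)))
  | ck A B C D =>
    show ik A B C D ≫
        ((((tq A hB.1.1 ⊻ tq C hB.1.2) ≫ oV (val A) (val C)) ⊼
            ((tq B hB.2.1 ⊻ tq D hB.2.2) ≫ oV (val B) (val D))) ≫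
          eV (val A || val C) (val B || val D)) =
      ((((tq A hA.1.1 ⊼ tq B hA.1.2) ≫ eV (val A) (val B)) ⊻
            ((tq C hA.2.1 ⊼ tq D hA.2.2) ≫ eV (val C) (val D))) ≫
          oV (val A && val B) (val C && val D)) ≫
        st ((val A && val B) || (val C && val D)) ((val A || val C) && (val B || val D)) hv
    have h1 : (((tq A hB.1.1 ⊻ tq C hB.1.2) ≫ oV (val A) (val C)) ⊼
          ((tq B hB.2.1 ⊻ tq D hB.2.2) ≫ oV (val B) (val D))) =
        ((tq A hB.1.1 ⊻ tq C hB.1.2) ⊼ (tq B hB.2.1 ⊻ tq D hB.2.2)) ≫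
          (oV (val A) (val C) ⊼ oV (val B) (val D)) := and_compH _ _ _ _
    have h2 : (((tq A hA.1.1 ⊼ tq B hA.1.2) ≫ eV (val A) (val B)) ⊻
          ((tq C hA.2.1 ⊼ tq D hA.2.2) ≫ eV (val C) (val D))) =
        ((tq A hA.1.1 ⊼ tq B hA.1.2) ⊻ (tq C hA.2.1 ⊼ tq D hA.2.2)) ≫
          (eV (val A) (val B) ⊻ eV (val C) (val D)) := or_compH _ _ _ _
    rw [h1, h2, ← Category.assoc, ← Category.assoc, ← nat_ik]
    simp only [Category.assoc]
    rw [ckV (val A) (val B) (val C) (val D) hv]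
  | wAndTo =>
    show wa ≫ 𝟙 Frm.bot = ((𝟙 Frm.bot ⊼ 𝟙 Frm.bot) ≫ wa) ≫ 𝟙 Frm.bot
    simp
  | wAndFrom =>
    show wa' ≫ ((𝟙 Frm.bot ⊼ 𝟙 Frm.bot) ≫ wa) = 𝟙 Frm.bot ≫ 𝟙 Frm.bot
    simp
  | wOrTo =>
    show wo ≫ 𝟙 Frm.top = ((𝟙 Frm.top ⊻ 𝟙 Frm.top) ≫ wo) ≫ 𝟙 Frm.top
    simp
  | wOrFrom =>
    show wo' ≫ ((𝟙 Frm.top ⊻ 𝟙 Frm.top) ≫ wo) = 𝟙 Frm.top ≫ 𝟙 Frm.top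
    simp
  | kappa =>
    show kq ≫ 𝟙 Frm.top = 𝟙 Frm.bot ≫ kq
    simp

/-- Lemma 3.4 : in the free SMI category 𝓜 , if no letter occurs in `A`
and `B`, then any two arrows `f, g : A → B` are equal. -/
theorem letterless_coherence {A B : Frm} (hA : NoLtr A) (hB : NoLtr B)
    (f g : Tm A B) : MEq f g := by
  have hf := key f hA hB (val_mono f)
  have hg := key g hA hB (val_mono g)
  have h1 : (⟦f⟧ : A ⟶ B) ≫ tq B hB = (⟦g⟧ : A ⟶ B) ≫ tq B hB := hf.trans hg.symm
  have h3 := congrArg (fun x => x ≫ fq B hB) h1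
  simp only [Category.assoc, tq_fq, Category.comp_id] at h3
  exact Quotient.exact h3

end SMI
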